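/- Under the same hypotheses (X = ⊕_i X_i, A X_i ⊆ X_i, g additive across the decomposition, U = Σ_i E_i with E_i = B⁻¹(X_i), minima attained), for each i ∈ I and x_i ∈ X_i the restricted DP recursion J̄_{i,T}(x_i) = g(x_i), J̄_{i,t}(x_i) = g(x_i) + min_{u∈E_i} J̄_{i,t+1}(A x_i + B u) satisfies J̄_{i,t}(x_i) = J_t*(x_i) for all t ≤ T, where J_t* is the cost-to-go of the full problem. -/

import Mathlib

/-- Cost-to-go functions of the finite-horizon DP problem with controls restricted to
a set `S ⊆ U`, indexed by the number of steps to go: `JgoOn S 0 = g` and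
`JgoOn S (k+1) x = g x + inf_{u ∈ S} JgoOn S k (A x + B u)`. -/
noncomputable def JgoOn {F U X : Type*} [Field F] [AddCommGroup U] [Module F U]
    [AddCommGroup X] [Module F X]
    (g : X → ℝ) (A : X →ₗ[F] X) (B : U →ₗ[F] X) (S : Set U) : ℕ → X → ℝ
  | 0 => g
  | (k + 1) => fun x => g x + sInf ((fun u : U => JgoOn g A B S k (A x + B u)) '' S)

section Aux

variable {F U X : Type*} [Field F] [AddCommGroup U] [Module F U]
    [AddCommGroup X] [Module F X]
    (g : X → ℝ) (A : X →ₗ[F] X) (B : U →ₗ[F] X)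

lemma jgoOn_nonneg (hgnn : ∀ x, 0 ≤ g x) (S : Set U) (hS : S.Nonempty) :
    ∀ k x, 0 ≤ JgoOn g A B S k x := by
  intro k
  induction k with
  | zero => exact hgnn
  | succ k ih =>
    intro x
    have h1 : (0:ℝ) ≤ sInf ((fun u : U => JgoOn g A B S k (A x + B u)) '' S) := by
      apply le_csInf (hS.image _)
      rintro b ⟨u, hu, rfl⟩
      exact ih _
    simpa only [JgoOn] using add_nonneg (hgnn x) h1

lemma jgoOn_bddBelow (hgnn : ∀ x, 0 ≤ g x) (S : Set U) (hS : S.Nonempty) (k : ℕ) (x : X) :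
    BddBelow ((fun u : U => JgoOn g A B S k (A x + B u)) '' S) := by
  refine ⟨0, ?_⟩
  rintro b ⟨u, hu, rfl⟩
  exact jgoOn_nonneg g A B hgnn S hS k _

lemma jgoOn_zero (hgnn : ∀ x, 0 ≤ g x) (hg0 : g 0 = 0) (S : Set U) (h0 : (0:U) ∈ S) :
    ∀ k, JgoOn g A B S k (0:X) = 0 := by
  have hS : S.Nonempty := ⟨0, h0⟩
  intro k
  induction k with
  | zero => exact hg0
  | succ k ih =>
    have hle : sInf ((fun u : U => JgoOn g A B S k ((0:X) + B u)) '' S) ≤ 0 := by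
      have hmem : JgoOn g A B S k (A (0:X) + B 0) ∈
          ((fun u : U => JgoOn g A B S k (A (0:X) + B u)) '' S) := ⟨0, h0, rfl⟩
      have := csInf_le (jgoOn_bddBelow g A B hgnn S hS k 0) hmem
      simpa [ih] using this
    have hge : (0:ℝ) ≤ sInf ((fun u : U => JgoOn g A B S k ((0:X) + B u)) '' S) := by
      apply le_csInf (hS.image _)
      rintro b ⟨u, hu, rfl⟩
      exact jgoOn_nonneg g A B hgnn S hS k _
    simp only [JgoOn, hg0, zero_add, map_zero]
    simp only [map_zero, zero_add] at hle hge
    linarith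

end Aux

/-- under the decomposition hypotheses with `U = Σ_i E_i`, the cost-to-go
functions of the restricted subproblem on `X_i` with controls in `E_i` agree with the
cost-to-go functions of the full problem on `X_i`. -/
theorem restricted_costToGo_eq_costToGo
    {F U X : Type*} [Field F] [AddCommGroup U] [Module F U]
    [AddCommGroup X] [Module F X] {ι : Type*} [Fintype ι] [DecidableEq ι]
    (A : X →ₗ[F] X) (B : U →ₗ[F] X) (Xs : ι → Submodule F X)
    (hXs : DirectSum.IsInternal Xs)
    (hA : ∀ i, ∀ x ∈ Xs i, A x ∈ Xs i)
    (ρ : ι → X →ₗ[F] X)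
    (hρmem : ∀ i x, ρ i x ∈ Xs i)
    (hρsum : ∀ x, ∑ i, ρ i x = x)
    (hρproj : ∀ i j, ∀ x ∈ Xs j, ρ i x = if i = j then x else 0)
    (g : X → ℝ) (hgnn : ∀ x, 0 ≤ g x) (hg0 : g 0 = 0)
    (hgadd : ∀ x, g x = ∑ i, g (ρ i x))
    (Es : ι → Submodule F U) (hEs : ∀ i, Es i = Submodule.comap B (Xs i))
    (hU : (⊤ : Submodule F U) = ⨆ i, Es i)
    (hatt : ∀ k (x : X), ∃ u : U, ∀ v : U,
      JgoOn g A B Set.univ k (A x + B u) ≤ JgoOn g A B Set.univ k (A x + B v))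
    (hattE : ∀ i k (x : X), ∃ u ∈ Es i, ∀ v ∈ Es i,
      JgoOn g A B (Es i) k (A x + B u) ≤ JgoOn g A B (Es i) k (A x + B v)) :
    ∀ i k, ∀ x ∈ Xs i, JgoOn g A B (Es i) k x = JgoOn g A B Set.univ k x := by
  have hEne : ∀ j, ((Es j : Set U)).Nonempty := fun j => ⟨0, (Es j).zero_mem⟩
  have hUne : (Set.univ : Set U).Nonempty := ⟨0, trivial⟩
  -- projection of a sum of components
  have hproj : ∀ (j : ι) (c : ι → X), (∀ l, c l ∈ Xs l) → ρ j (∑ l, c l) = c j := by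
    intro j c hc
    rw [map_sum]
    have : ∀ l ∈ Finset.univ, ρ j (c l) = if j = l then c l else 0 := fun l _ =>
      hρproj j l (c l) (hc l)
    rw [Finset.sum_congr rfl this]
    simp
  -- components of A x + B u
  have hcomp : ∀ (x : X) (u : ι → U), (∀ l, u l ∈ Es l) →
      ∀ j, ρ j (A x + B (∑ l, u l)) = A (ρ j x) + B (u j) := by
    intro x u hu j
    have h1 : ρ j (A x) = A (ρ j x) := by
      have : A x = ∑ l, A (ρ l x) := by rw [← map_sum, hρsum]
      rw [this, hproj j _ (fun l => hA l _ (hρmem l x))]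
    have h2 : ρ j (B (∑ l, u l)) = B (u j) := by
      rw [map_sum]
      rw [hproj j _ (fun l => by
        have := hu l
        rw [hEs l] at this
        exact this)]
    rw [map_add, h1, h2]
  -- L1 : lower bound via decomposition
  have L1 : ∀ k (x : X), ∑ j, JgoOn g A B (Es j) k (ρ j x) ≤ JgoOn g A B Set.univ k x := by
    intro k
    induction k with
    | zero =>
      intro x
      exact le_of_eq (hgadd x).symm
    | succ k ih =>
      intro x
      have key : ∑ j, sInf ((fun u : U => JgoOn g A B (Es j) k (A (ρ j x) + B u)) '' (Es j))
          ≤ sInf ((fun u : U => JgoOn g A B Set.univ k (A x + B u)) '' Set.univ) := by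
        apply le_csInf (hUne.image _)
        rintro b ⟨u, -, rfl⟩
        -- decompose u
        have hmem : u ∈ ⨆ j, Es j := by rw [← hU]; trivial
        rw [Submodule.mem_iSup_iff_exists_finsupp] at hmem
        obtain ⟨f, hf, hfsum⟩ := hmem
        have hsum : ∑ l, f l = u := by
          rw [← hfsum, Finsupp.sum_fintype]
          intro; rfl
        calc ∑ j, sInf ((fun v : U => JgoOn g A B (Es j) k (A (ρ j x) + B v)) '' (Es j))
            ≤ ∑ j, JgoOn g A B (Es j) k (A (ρ j x) + B (f j)) := by
              apply Finset.sum_le_sum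
              intro j _
              exact csInf_le (jgoOn_bddBelow g A B hgnn _ (hEne j) k _) ⟨f j, hf j, rfl⟩
          _ = ∑ j, JgoOn g A B (Es j) k (ρ j (A x + B u)) := by
              apply Finset.sum_congr rfl
              intro j _
              rw [← hsum, hcomp x (fun l => f l) hf j]
          _ ≤ JgoOn g A B Set.univ k (A x + B u) := ih _
      calc ∑ j, JgoOn g A B (Es j) (k+1) (ρ j x)
          = ∑ j, (g (ρ j x) + sInf ((fun u : U =>
              JgoOn g A B (Es j) k (A (ρ j x) + B u)) '' (Es j))) := rfl
        _ = (∑ j, g (ρ j x)) + ∑ j, sInf ((fun u : U =>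
              JgoOn g A B (Es j) k (A (ρ j x) + B u)) '' (Es j)) := Finset.sum_add_distrib
        _ ≤ g x + sInf ((fun u : U => JgoOn g A B Set.univ k (A x + B u)) '' Set.univ) := by
              rw [← hgadd x] at *
              exact add_le_add_right key _
        _ = JgoOn g A B Set.univ (k+1) x := rfl
  -- L2 : upper bound since univ ⊇ Es i, for x ∈ Xs i
  have L2 : ∀ i k, ∀ x ∈ Xs i,
      JgoOn g A B Set.univ k x ≤ JgoOn g A B (Es i) k x := by
    intro i k
    induction k with
    | zero => intro x _; exact le_rfl
    | succ k ih =>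
      intro x hx
      have key : sInf ((fun u : U => JgoOn g A B Set.univ k (A x + B u)) '' Set.univ)
          ≤ sInf ((fun u : U => JgoOn g A B (Es i) k (A x + B u)) '' (Es i)) := by
        apply le_csInf ((hEne i).image _)
        rintro b ⟨u, hu, rfl⟩
        have hmem : A x + B u ∈ Xs i := by
          apply Submodule.add_mem _ (hA i x hx)
          have := hu; rw [hEs i] at this; exact this
        calc sInf ((fun u : U => JgoOn g A B Set.univ k (A x + B u)) '' Set.univ)
            ≤ JgoOn g A B Set.univ k (A x + B u) :=
              csInf_le (jgoOn_bddBelow g A B hgnn _ hUne k x) ⟨u, trivial, rfl⟩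
          _ ≤ JgoOn g A B (Es i) k (A x + B u) := ih _ hmem
      exact add_le_add_right key _
  -- combine
  intro i k x hx
  have hsum : ∑ j, JgoOn g A B (Es j) k (ρ j x) = JgoOn g A B (Es i) k x := by
    have : ∀ j ∈ Finset.univ, JgoOn g A B (Es j) k (ρ j x)
        = if j = i then JgoOn g A B (Es i) k x else 0 := by
      intro j _
      rw [hρproj j i x hx]
      by_cases h : j = i
      · simp [h]
      · simp only [h, if_false]
        exact jgoOn_zero g A B hgnn hg0 _ (Es j).zero_mem k
    rw [Finset.sum_congr rfl this]
    simp
  have h1 := L1 k x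
  rw [hsum] at h1
  exact le_antisymm h1 (L2 i k x hx)
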